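/- Suppose Assumptions 1 and 3 hold. Fix an initial time t0 ≥ 0 and define B(t) = A((t+1)L − 1 + t0) ⋯ A(tL + 1 + t0) A(tL + t0) for each t ≥ 0, with entries b_ij(t). Then b_ii(t) ≥ η^L for all i ∈ V and t ≥ 0, and each B(t) satisfies the cut-balance condition: for every nonempty proper subset S of V, ∑_{i∉S, j∈S} b_ij(t) ≤ M* ∑_{i∈S, j∉S} b_ij(t), where M* = (N−1) K η^{−L+1}. -/

import Mathlib

open Filter Finset

/-- `Bmat A L t0 t = A((t+1)L − 1 + t0) ⋯ A(tL + 1 + t0) A(tL + t0)`. -/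
def Bmat {N : ℕ} (A : ℕ → Matrix (Fin N) (Fin N) ℝ) (L t0 t : ℕ) :
    Matrix (Fin N) (Fin N) ℝ :=
  (List.ofFn (fun u : Fin L => A ((t + 1) * L - 1 - (u : ℕ) + t0))).prod

section Aux
variable {N : ℕ} {η : ℝ}

/-- basic properties of a factor matrix. -/
def GoodM (η : ℝ) (M : Matrix (Fin N) (Fin N) ℝ) : Prop :=
  (∀ i j, 0 ≤ M i j) ∧ (∀ i, ∑ j, M i j = 1) ∧ (∀ i, η ≤ M i i)

lemma prod_props (hη : 0 ≤ η) (l : List (Matrix (Fin N) (Fin N) ℝ))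
    (h : ∀ M ∈ l, GoodM η M) :
    (∀ i j, 0 ≤ l.prod i j) ∧ (∀ i, ∑ j, l.prod i j = 1) ∧
      (∀ i, η ^ l.length ≤ l.prod i i) := by
  induction l with
  | nil =>
    refine ⟨fun i j => ?_, fun i => ?_, fun i => ?_⟩
    · simp only [List.prod_nil, Matrix.one_apply]
      split <;> norm_num
    · simp [Matrix.one_apply]
    · simp [Matrix.one_apply]
  | cons M l ih =>
    obtain ⟨hMn, hMr, hMd⟩ := h M List.mem_cons_self
    obtain ⟨hPn, hPr, hPd⟩ := ih (fun M hM => h M (List.mem_cons_of_mem _ hM))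
    refine ⟨fun i j => ?_, fun i => ?_, fun i => ?_⟩
    · rw [List.prod_cons, Matrix.mul_apply]
      exact Finset.sum_nonneg fun k _ => mul_nonneg (hMn i k) (hPn k j)
    · rw [List.prod_cons]
      simp only [Matrix.mul_apply]
      rw [Finset.sum_comm]
      simp_rw [← Finset.mul_sum, hPr]
      simpa using hMr i
    · rw [List.prod_cons, Matrix.mul_apply, List.length_cons, pow_succ']
      calc η * η ^ l.length ≤ M i i * l.prod i i :=
            mul_le_mul (hMd i) (hPd i) (pow_nonneg hη _) (le_trans hη (hMd i))
        _ ≤ ∑ k, M i k * l.prod k i :=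
            Finset.single_le_sum (fun k _ => mul_nonneg (hMn i k) (hPn k i))
              (Finset.mem_univ i)

lemma entry_le_one {M : Matrix (Fin N) (Fin N) ℝ}
    (hn : ∀ i j, 0 ≤ M i j) (hr : ∀ i, ∑ j, M i j = 1) (i j : Fin N) :
    M i j ≤ 1 := by
  calc M i j ≤ ∑ k, M i k :=
        Finset.single_le_sum (fun k _ => hn i k) (Finset.mem_univ j)
    _ = 1 := hr i

lemma cross_step (hN : 2 ≤ N) (S : Finset (Fin N)) (hS : S.Nonempty)
    (P Q : Matrix (Fin N) (Fin N) ℝ)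
    (hPn : ∀ i j, 0 ≤ P i j) (hPr : ∀ i, ∑ j, P i j = 1)
    (hQn : ∀ i j, 0 ≤ Q i j) (hQr : ∀ i, ∑ j, Q i j = 1) :
    ∑ i ∈ Sᶜ, ∑ j ∈ S, (P * Q) i j ≤
      (∑ i ∈ Sᶜ, ∑ j ∈ S, P i j) + ((N : ℝ) - 1) * ∑ i ∈ Sᶜ, ∑ j ∈ S, Q i j := by
  have key : ∑ i ∈ Sᶜ, ∑ j ∈ S, (P * Q) i j
      = ∑ k, (∑ i ∈ Sᶜ, P i k) * (∑ j ∈ S, Q k j) := by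
    simp only [Matrix.mul_apply, Finset.sum_mul, Finset.mul_sum]
    calc ∑ i ∈ Sᶜ, ∑ j ∈ S, ∑ k, P i k * Q k j
        = ∑ j ∈ S, ∑ i ∈ Sᶜ, ∑ k, P i k * Q k j := Finset.sum_comm
      _ = ∑ j ∈ S, ∑ k, ∑ i ∈ Sᶜ, P i k * Q k j :=
          Finset.sum_congr rfl fun j _ => Finset.sum_comm
      _ = ∑ k, ∑ j ∈ S, ∑ i ∈ Sᶜ, P i k * Q k j := Finset.sum_comm
  rw [key, ← Finset.sum_add_sum_compl S]
  have h1 : ∑ k ∈ S, (∑ i ∈ Sᶜ, P i k) * (∑ j ∈ S, Q k j)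
      ≤ ∑ i ∈ Sᶜ, ∑ j ∈ S, P i j := by
    rw [show ∑ i ∈ Sᶜ, ∑ j ∈ S, P i j = ∑ j ∈ S, ∑ i ∈ Sᶜ, P i j from Finset.sum_comm]
    refine Finset.sum_le_sum fun k _ => ?_
    have hq1 : ∑ j ∈ S, Q k j ≤ 1 := by
      rw [← hQr k]
      exact Finset.sum_le_sum_of_subset_of_nonneg (Finset.subset_univ S)
        (fun j _ _ => hQn k j)
    calc (∑ i ∈ Sᶜ, P i k) * (∑ j ∈ S, Q k j) ≤ (∑ i ∈ Sᶜ, P i k) * 1 :=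
          mul_le_mul_of_nonneg_left hq1
            (Finset.sum_nonneg fun i _ => hPn i k)
      _ = ∑ i ∈ Sᶜ, P i k := mul_one _
  have h2 : ∑ k ∈ Sᶜ, (∑ i ∈ Sᶜ, P i k) * (∑ j ∈ S, Q k j)
      ≤ ((N : ℝ) - 1) * ∑ i ∈ Sᶜ, ∑ j ∈ S, Q i j := by
    rw [Finset.mul_sum]
    refine Finset.sum_le_sum fun k _ => ?_
    have hcard : (Sᶜ.card : ℝ) ≤ (N : ℝ) - 1 := by
      have h1 : 1 ≤ S.card := Finset.one_le_card.mpr hS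
      have h2 : Sᶜ.card = N - S.card := by
        rw [Finset.card_compl, Fintype.card_fin]
      have : Sᶜ.card ≤ N - 1 := by omega
      have hN1 : 1 ≤ N := by omega
      calc (Sᶜ.card : ℝ) ≤ ((N - 1 : ℕ) : ℝ) := by exact_mod_cast this
        _ = (N : ℝ) - 1 := by
            rw [Nat.cast_sub hN1]; norm_num
    have hcol : ∑ i ∈ Sᶜ, P i k ≤ (N : ℝ) - 1 := by
      calc ∑ i ∈ Sᶜ, P i k ≤ ∑ _i ∈ Sᶜ, (1 : ℝ) :=
            Finset.sum_le_sum fun i _ => entry_le_one hPn hPr i k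
        _ = (Sᶜ.card : ℝ) := by simp
        _ ≤ (N : ℝ) - 1 := hcard
    exact mul_le_mul_of_nonneg_right hcol
      (Finset.sum_nonneg fun j _ => hQn k j)
  linarith

lemma cross_prod (hN : 2 ≤ N) (hη : 0 ≤ η) (S : Finset (Fin N)) (hS : S.Nonempty)
    (l : List (Matrix (Fin N) (Fin N) ℝ)) (h : ∀ M ∈ l, GoodM η M) :
    ∑ i ∈ Sᶜ, ∑ j ∈ S, l.prod i j ≤
      ((N : ℝ) - 1) * (l.map (fun M => ∑ i ∈ Sᶜ, ∑ j ∈ S, M i j)).sum := by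
  induction l using List.reverseRecOn with
  | nil =>
    have : ∑ i ∈ Sᶜ, ∑ j ∈ S, (1 : Matrix (Fin N) (Fin N) ℝ) i j = 0 := by
      refine Finset.sum_eq_zero fun i hi => Finset.sum_eq_zero fun j hj => ?_
      have : i ≠ j := by
        intro hij
        exact (Finset.mem_compl.mp hi) (hij ▸ hj)
      simp [Matrix.one_apply_ne this]
    simp [this]
  | append_singleton l M ih =>
    have hl : ∀ M' ∈ l, GoodM η M' := fun M' hM' => h M' (by simp [hM'])
    obtain ⟨hMn, hMr, hMd⟩ := h M (by simp)
    obtain ⟨hPn, hPr, _⟩ := prod_props hη l hl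
    have step := cross_step hN S hS l.prod M hPn hPr hMn hMr
    have hprodapp : (l ++ [M]).prod = l.prod * M := by simp
    rw [hprodapp]
    have hmap : ((l ++ [M]).map (fun M => ∑ i ∈ Sᶜ, ∑ j ∈ S, M i j)).sum
        = (l.map (fun M => ∑ i ∈ Sᶜ, ∑ j ∈ S, M i j)).sum
          + ∑ i ∈ Sᶜ, ∑ j ∈ S, M i j := by simp
    rw [hmap]
    have hcross : (0:ℝ) ≤ ∑ i ∈ Sᶜ, ∑ j ∈ S, M i j :=
      Finset.sum_nonneg fun i _ => Finset.sum_nonneg fun j _ => hMn i j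
    have hN1 : (1:ℝ) ≤ (N:ℝ) - 1 := by
      have : (2:ℝ) ≤ (N:ℝ) := by exact_mod_cast hN
      linarith
    have := ih hl
    nlinarith [step]

lemma low_prod (hη : 0 ≤ η) (l : List (Matrix (Fin N) (Fin N) ℝ))
    (h : ∀ M ∈ l, GoodM η M) (i j : Fin N) (hij : i ≠ j) :
    η ^ (l.length - 1) * (l.map (fun M => M i j)).sum ≤ l.prod i j := by
  induction l with
  | nil => simp [Matrix.one_apply_ne hij]
  | cons M l ih =>
    obtain ⟨hMn, hMr, hMd⟩ := h M List.mem_cons_self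
    have hl : ∀ M' ∈ l, GoodM η M' := fun M' hM' => h M' (List.mem_cons_of_mem _ hM')
    obtain ⟨hPn, hPr, hPd⟩ := prod_props hη l hl
    have ihl := ih hl
    rw [List.prod_cons, Matrix.mul_apply]
    have hpair : M i i * l.prod i j + M i j * l.prod j j ≤ ∑ k, M i k * l.prod k j := by
      have hsub : ({i, j} : Finset (Fin N)) ⊆ Finset.univ := Finset.subset_univ _
      have := Finset.sum_le_sum_of_subset_of_nonneg hsub
        (fun k _ _ => mul_nonneg (hMn i k) (hPn k j))
      rwa [Finset.sum_pair hij] at this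
    have hterm1 : η * l.prod i j ≤ M i i * l.prod i j :=
      mul_le_mul_of_nonneg_right (hMd i) (hPn i j)
    have hterm2 : M i j * η ^ l.length ≤ M i j * l.prod j j :=
      mul_le_mul_of_nonneg_left (hPd j) (hMn i j)
    simp only [List.map_cons, List.sum_cons, List.length_cons]
    have hlen : (l.length + 1) - 1 = l.length := by omega
    rw [hlen, mul_add]
    have key2 : η ^ l.length * (l.map (fun M => M i j)).sum ≤ η * l.prod i j := by
      cases l with
      | nil => simp [Matrix.one_apply_ne hij]
      | cons M' l' =>
        have hlen2 : η ^ (M' :: l').length = η * η ^ ((M' :: l').length - 1) := by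
          rw [List.length_cons]
          rw [Nat.add_sub_cancel]
          rw [pow_succ']
        rw [hlen2, mul_assoc]
        exact mul_le_mul_of_nonneg_left ihl hη
    calc η ^ l.length * M i j + η ^ l.length * (l.map (fun M => M i j)).sum
        ≤ M i j * l.prod j j + η * l.prod i j := by
          refine add_le_add ?_ key2
          rw [mul_comm]
          exact hterm2
      _ = η * l.prod i j + M i j * l.prod j j := by ring
      _ ≤ M i i * l.prod i j + M i j * l.prod j j := by linarith
      _ ≤ ∑ k, M i k * l.prod k j := hpair

end Aux

theorem stmt8 (N : ℕ) (hN : 2 ≤ N) (A : ℕ → Matrix (Fin N) (Fin N) ℝ)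
    (η : ℝ) (hη0 : 0 < η) (hη1 : η < 1)
    (hnonneg : ∀ t i j, 0 ≤ A t i j)
    (hrow : ∀ t i, ∑ j, A t i j = 1)
    (hdiag : ∀ t i, η ≤ A t i i)
    (L : ℕ) (hL : 1 ≤ L) (K : ℝ) (hK : 1 ≤ K)
    (hbal : ∀ S : Finset (Fin N), S.Nonempty → S ≠ Finset.univ → ∀ s : ℕ,
      ∑ t ∈ Finset.Ico s (s + L), ∑ i ∈ Sᶜ, ∑ j ∈ S, A t i j ≤
        K * ∑ t ∈ Finset.Ico s (s + L), ∑ i ∈ S, ∑ j ∈ Sᶜ, A t i j)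
    (t0 : ℕ) :
    (∀ t : ℕ, ∀ i : Fin N, η ^ L ≤ Bmat A L t0 t i i) ∧
      (∀ t : ℕ, ∀ S : Finset (Fin N), S.Nonempty → S ≠ Finset.univ →
        ∑ i ∈ Sᶜ, ∑ j ∈ S, Bmat A L t0 t i j ≤
          ((N : ℝ) - 1) * K / η ^ (L - 1) * ∑ i ∈ S, ∑ j ∈ Sᶜ, Bmat A L t0 t i j) := by
  have hgood : ∀ t : ℕ, ∀ M ∈ (List.ofFn (fun u : Fin L =>
      A ((t + 1) * L - 1 - (u : ℕ) + t0))), GoodM η M := by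
    intro t M hM
    rw [List.mem_ofFn] at hM
    obtain ⟨u, rfl⟩ := hM
    exact ⟨hnonneg _, hrow _, hdiag _⟩
  have hlen : ∀ t : ℕ, (List.ofFn (fun u : Fin L =>
      A ((t + 1) * L - 1 - (u : ℕ) + t0))).length = L := fun t => List.length_ofFn
  -- reindexing lemma
  have hreindex : ∀ (t : ℕ) (F : ℕ → ℝ),
      ∑ u : Fin L, F ((t + 1) * L - 1 - (u : ℕ) + t0)
        = ∑ s ∈ Finset.Ico (t * L + t0) (t * L + t0 + L), F s := by
    intro t F
    rw [Fin.sum_univ_eq_sum_range (fun u => F ((t + 1) * L - 1 - u + t0))]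
    have h1 : ∑ u ∈ Finset.range L, F ((t + 1) * L - 1 - u + t0)
        = ∑ u ∈ Finset.range L, F (t * L + (L - 1 - u) + t0) := by
      refine Finset.sum_congr rfl fun u hu => ?_
      have hu' := Finset.mem_range.mp hu
      have hmul : (t + 1) * L = t * L + L := by ring
      congr 1
      omega
    rw [h1, Finset.sum_range_reflect (fun v => F (t * L + v + t0))]
    rw [Finset.sum_Ico_eq_sum_range]
    have h2 : t * L + t0 + L - (t * L + t0) = L := by omega
    rw [h2]
    refine Finset.sum_congr rfl fun v _ => ?_
    congr 1
    omega
  constructor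
  · intro t i
    have := (prod_props hη0.le _ (hgood t)).2.2 i
    rwa [hlen t] at this
  · intro t S hS hSu
    set l := List.ofFn (fun u : Fin L => A ((t + 1) * L - 1 - (u : ℕ) + t0)) with hl
    have hBl : Bmat A L t0 t = l.prod := rfl
    set a := t * L + t0 with ha
    -- cross sums of factors
    have hmapcross : (l.map (fun M => ∑ i ∈ Sᶜ, ∑ j ∈ S, M i j)).sum
        = ∑ s ∈ Finset.Ico a (a + L), ∑ i ∈ Sᶜ, ∑ j ∈ S, A s i j := by
      rw [hl, List.map_ofFn, List.sum_ofFn]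
      exact hreindex t (fun s => ∑ i ∈ Sᶜ, ∑ j ∈ S, A s i j)
    set X := ∑ s ∈ Finset.Ico a (a + L), ∑ i ∈ S, ∑ j ∈ Sᶜ, A s i j with hX
    set Y := ∑ s ∈ Finset.Ico a (a + L), ∑ i ∈ Sᶜ, ∑ j ∈ S, A s i j with hY
    have hYK : Y ≤ K * X := hbal S hS hSu a
    have hupper : ∑ i ∈ Sᶜ, ∑ j ∈ S, l.prod i j ≤ ((N : ℝ) - 1) * Y := by
      have := cross_prod hN hη0.le S hS l (hgood t)
      rwa [hmapcross] at this
    -- lower bound on out-flow of B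
    have hlower : η ^ (L - 1) * X ≤ ∑ i ∈ S, ∑ j ∈ Sᶜ, l.prod i j := by
      have hXswap : X = ∑ i ∈ S, ∑ j ∈ Sᶜ, ∑ s ∈ Finset.Ico a (a + L), A s i j := by
        calc X = ∑ i ∈ S, ∑ s ∈ Finset.Ico a (a + L), ∑ j ∈ Sᶜ, A s i j :=
              Finset.sum_comm
          _ = ∑ i ∈ S, ∑ j ∈ Sᶜ, ∑ s ∈ Finset.Ico a (a + L), A s i j :=
              Finset.sum_congr rfl fun i _ => Finset.sum_comm
      rw [hXswap, Finset.mul_sum]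
      refine Finset.sum_le_sum fun i hi => ?_
      rw [Finset.mul_sum]
      refine Finset.sum_le_sum fun j hj => ?_
      have hij : i ≠ j := by
        intro hij
        exact (Finset.mem_compl.mp hj) (hij ▸ hi)
      have := low_prod hη0.le l (hgood t) i j hij
      rw [hlen t] at this
      have hmapij : (l.map (fun M => M i j)).sum
          = ∑ s ∈ Finset.Ico a (a + L), A s i j := by
        rw [hl, List.map_ofFn, List.sum_ofFn]
        exact hreindex t (fun s => A s i j)
      rwa [hmapij] at this
    have hXnn : 0 ≤ X := Finset.sum_nonneg fun s _ => Finset.sum_nonneg fun i _ =>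
      Finset.sum_nonneg fun j _ => hnonneg s i j
    have hN1 : (0:ℝ) ≤ (N:ℝ) - 1 := by
      have : (2:ℝ) ≤ (N:ℝ) := by exact_mod_cast hN
      linarith
    have hK0 : (0:ℝ) ≤ K := by linarith
    have hpow : (0:ℝ) < η ^ (L - 1) := pow_pos hη0 _
    rw [hBl]
    have hcoef : (0:ℝ) ≤ ((N : ℝ) - 1) * K / η ^ (L - 1) :=
      div_nonneg (mul_nonneg hN1 hK0) hpow.le
    calc ∑ i ∈ Sᶜ, ∑ j ∈ S, l.prod i j ≤ ((N : ℝ) - 1) * Y := hupper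
      _ ≤ ((N : ℝ) - 1) * (K * X) := mul_le_mul_of_nonneg_left hYK hN1
      _ = ((N : ℝ) - 1) * K / η ^ (L - 1) * (η ^ (L - 1) * X) := by
          field_simp
      _ ≤ ((N : ℝ) - 1) * K / η ^ (L - 1) * ∑ i ∈ S, ∑ j ∈ Sᶜ, l.prod i j :=
          mul_le_mul_of_nonneg_left hlower hcoef
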